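/- Let M = C^{d×d} with delta-form δ(x) = d·tr(xσ) where σ is diagonal. Let A: M → M be a linear map commuting with left and right multiplications appropriately (M-bimodular in the graph sense), and define P := Σ_{x ∈ B} ρ(x) ⊗ λ(A(μ^{1/2}(x)*)) on L²(M) ⊗ L²(M), B an orthonormal basis of L²(M). Then (δ ⊗ id) P ⟦E_{k,k} ⊗ E_{m,m}⟧ = ⟦A(E_{k,k}) E_{m,m}⟧. -/

import Mathlib

open scoped ComplexOrder TensorProduct
open Matrix

/-- Let `M = ℂ^{d×d}` with delta-form `δ(x) = d·tr(xσ)`, `σ` diagonal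
(`τ = σ^{1/2}`, `μ^{±1/2}(x) = τ^{∓1} x τ^{±1}`), `A : M → M` a linear (adjacency) map,
`B` an orthonormal basis of `L²(M)`, and
`P := ∑_{x ∈ B} ρ(x) ⊗ λ(A(μ^{1/2}(x)*))` on `L²(M) ⊗ L²(M)`
(where `ρ` is the bimodule right action `ξ ↦ ξ·x = ξ μ^{-1/2}(x)` and `λ` the left
action).  Then `(δ ⊗ id) P ⟦E_{k,k} ⊗ E_{m,m}⟧ = ⟦A(E_{k,k}) E_{m,m}⟧`. -/
theorem stmt17 (d : ℕ) (hd : 0 < d)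
    (σ τ : Matrix (Fin d) (Fin d) ℂ) (hσ : σ.PosDef)
    (htr : (σ⁻¹).trace = (d : ℂ))
    (hdiag : σ.IsDiag)
    (hτ : τ.PosDef) (hττ : τ * τ = σ) (hτdiag : τ.IsDiag)
    (A : Matrix (Fin d) (Fin d) ℂ →ₗ[ℂ] Matrix (Fin d) (Fin d) ℂ)
    -- an orthonormal basis of L²(M)
    {ι : Type*} [Fintype ι] [DecidableEq ι] (b : ι → Matrix (Fin d) (Fin d) ℂ)
    (honb : ∀ i j, (d : ℂ) * ((star (b j)) * (b i) * σ).trace = if i = j then 1 else 0)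
    (hspan : Submodule.span ℂ (Set.range b) = ⊤)
    -- P = Σ_x ρ(x) ⊗ λ(A(μ^{1/2}(x)*))
    (P : (Matrix (Fin d) (Fin d) ℂ ⊗[ℂ] Matrix (Fin d) (Fin d) ℂ) →ₗ[ℂ]
      (Matrix (Fin d) (Fin d) ℂ ⊗[ℂ] Matrix (Fin d) (Fin d) ℂ))
    (hP : P = ∑ i, TensorProduct.map
      (LinearMap.mulRight ℂ (τ * (b i) * τ⁻¹))
      (LinearMap.mulLeft ℂ (A (star (τ⁻¹ * (b i) * τ)))))
    -- δ ⊗ id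
    (D : (Matrix (Fin d) (Fin d) ℂ ⊗[ℂ] Matrix (Fin d) (Fin d) ℂ) →ₗ[ℂ]
      Matrix (Fin d) (Fin d) ℂ)
    (hD : ∀ u v, D (u ⊗ₜ[ℂ] v) = ((d : ℂ) * (u * σ).trace) • v)
    (k m : Fin d) :
    D (P ((Matrix.single k k (1 : ℂ)) ⊗ₜ[ℂ] (Matrix.single m m (1 : ℂ))))
      = A (Matrix.single k k (1 : ℂ)) * Matrix.single m m (1 : ℂ) := by
  classical
  have hτu : IsUnit τ.det := isUnit_iff_ne_zero.mpr (ne_of_gt hτ.det_pos)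
  have hτi : τ * τ⁻¹ = 1 := Matrix.mul_nonsing_inv τ hτu
  have hiτ : τ⁻¹ * τ = 1 := Matrix.nonsing_inv_mul τ hτu
  have hτh : τᴴ = τ := hτ.1
  have hτih : (τ⁻¹)ᴴ = τ⁻¹ := by rw [Matrix.conjTranspose_nonsing_inv, hτh]
  have hσh : σᴴ = σ := hσ.1
  set E : Matrix (Fin d) (Fin d) ℂ := Matrix.single k k 1 with hE
  set F : Matrix (Fin d) (Fin d) ℂ := Matrix.single m m 1 with hF
  have hEh : Eᴴ = E := by
    rw [hE, Matrix.single, ← Matrix.ext_iff]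
    intro i j
    simp [Matrix.conjTranspose_apply, Matrix.of_apply, and_comm]
  -- expansion in the orthonormal basis
  have expand : ∀ ξ : Matrix (Fin d) (Fin d) ℂ,
      ∑ i, ((d : ℂ) * ((star (b i)) * ξ * σ).trace) • b i = ξ := by
    have hL : (∑ i, LinearMap.smulRight
        ((d : ℂ) • (Matrix.traceLinearMap (Fin d) ℂ ℂ ∘ₗ
          LinearMap.mulRight ℂ σ ∘ₗ LinearMap.mulLeft ℂ (star (b i)))) (b i))
        = (LinearMap.id : Matrix (Fin d) (Fin d) ℂ →ₗ[ℂ] Matrix (Fin d) (Fin d) ℂ) := by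
      apply LinearMap.ext_on hspan
      rintro x ⟨j, rfl⟩
      simp only [LinearMap.sum_apply, LinearMap.smulRight_apply, LinearMap.smul_apply,
        LinearMap.comp_apply, LinearMap.mulLeft_apply, LinearMap.mulRight_apply,
        Matrix.traceLinearMap_apply, LinearMap.id_apply, smul_eq_mul, honb]
      simp
    intro ξ
    have h := LinearMap.congr_fun hL ξ
    simpa only [LinearMap.sum_apply, LinearMap.smulRight_apply, LinearMap.smul_apply,
      LinearMap.comp_apply, LinearMap.mulLeft_apply, LinearMap.mulRight_apply,
      Matrix.traceLinearMap_apply, LinearMap.id_apply, smul_eq_mul] using h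
  -- the key identity
  have key : ∑ i, ((d : ℂ) * (E * (τ * b i * τ⁻¹) * σ).trace) • star (τ⁻¹ * b i * τ) = E := by
    have h1 := expand (τ * E * τ⁻¹)
    have h2 : ∑ i, star ((d : ℂ) * ((star (b i)) * (τ * E * τ⁻¹) * σ).trace) • star (b i)
        = star (τ * E * τ⁻¹) := by
      have h := congrArg star h1
      rw [star_sum] at h
      simpa only [star_smul] using h
    have h3 : star (τ * E * τ⁻¹) = τ⁻¹ * E * τ := by
      simp only [Matrix.star_eq_conjTranspose, Matrix.conjTranspose_mul, hτh, hτih, hEh]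
      noncomm_ring
    have h4 : τ * (τ⁻¹ * E * τ) * τ⁻¹ = E := by
      rw [← mul_assoc, ← mul_assoc, hτi, one_mul, mul_assoc, hτi, mul_one]
    have hστ : τ⁻¹ * σ = τ := by rw [← hττ, ← mul_assoc, hiτ, one_mul]
    have hστ' : σ * τ⁻¹ = τ := by rw [← hττ, mul_assoc, hτi, mul_one]
    have hterm : ∀ i, ((d : ℂ) * (E * (τ * b i * τ⁻¹) * σ).trace) • star (τ⁻¹ * b i * τ)
        = τ * (star ((d : ℂ) * ((star (b i)) * (τ * E * τ⁻¹) * σ).trace) • star (b i)) * τ⁻¹ := by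
      intro i
      have hcoef : star ((d : ℂ) * ((star (b i)) * (τ * E * τ⁻¹) * σ).trace)
          = (d : ℂ) * (E * (τ * b i * τ⁻¹) * σ).trace := by
        rw [star_mul']
        congr 1
        · simp
        · rw [show star (((star (b i)) * (τ * E * τ⁻¹) * σ).trace)
              = (((star (b i)) * (τ * E * τ⁻¹) * σ)ᴴ).trace from
              (Matrix.trace_conjTranspose _).symm]
          have hct : ((star (b i)) * (τ * E * τ⁻¹) * σ)ᴴ = σ * (τ⁻¹ * E * τ) * b i := by
            simp only [Matrix.star_eq_conjTranspose, Matrix.conjTranspose_mul, hσh, hτh, hτih,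
              hEh, Matrix.conjTranspose_conjTranspose]
            noncomm_ring
          rw [hct]
          calc (σ * (τ⁻¹ * E * τ) * b i).trace
              = ((σ * τ⁻¹) * E * (τ * b i)).trace := by congr 1; noncomm_ring
            _ = ((τ * E) * (τ * b i)).trace := by rw [hστ']
            _ = ((τ * b i) * (τ * E)).trace := Matrix.trace_mul_comm _ _
            _ = (E * (τ * b i * τ⁻¹) * σ).trace := by
                rw [show E * (τ * b i * τ⁻¹) * σ = E * ((τ * b i) * (τ⁻¹ * σ)) from by
                  noncomm_ring, hστ, Matrix.trace_mul_comm E ((τ * b i) * τ)]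
                congr 1
                noncomm_ring
      rw [hcoef, mul_smul_comm, smul_mul_assoc]
      congr 1
      simp only [Matrix.star_eq_conjTranspose, Matrix.conjTranspose_mul, hτh, hτih]
      noncomm_ring
    calc ∑ i, ((d : ℂ) * (E * (τ * b i * τ⁻¹) * σ).trace) • star (τ⁻¹ * b i * τ)
        = ∑ i, τ * (star ((d : ℂ) * ((star (b i)) * (τ * E * τ⁻¹) * σ).trace) • star (b i))
            * τ⁻¹ := Finset.sum_congr rfl fun i _ => hterm i
      _ = τ * (∑ i, star ((d : ℂ) * ((star (b i)) * (τ * E * τ⁻¹) * σ).trace) • star (b i))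
            * τ⁻¹ := by rw [Finset.mul_sum, Finset.sum_mul]
      _ = τ * (τ⁻¹ * E * τ) * τ⁻¹ := by rw [h2, h3]
      _ = E := h4
  -- main computation
  rw [hP]
  simp only [LinearMap.sum_apply, TensorProduct.map_tmul, LinearMap.mulRight_apply,
    LinearMap.mulLeft_apply, map_sum, hD]
  calc ∑ i, ((d : ℂ) * ((E * (τ * b i * τ⁻¹)) * σ).trace) • (A (star (τ⁻¹ * b i * τ)) * F)
      = (∑ i, ((d : ℂ) * (E * (τ * b i * τ⁻¹) * σ).trace) • A (star (τ⁻¹ * b i * τ))) * F := by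
        rw [Finset.sum_mul]
        exact Finset.sum_congr rfl fun i _ => (smul_mul_assoc _ _ _).symm
    _ = A (∑ i, ((d : ℂ) * (E * (τ * b i * τ⁻¹) * σ).trace) • star (τ⁻¹ * b i * τ)) * F := by
        rw [map_sum]
        congr 1
        exact Finset.sum_congr rfl fun i _ => (A.map_smul _ _).symm
    _ = A E * F := by rw [key]
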